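/- arXiv:0801.3404 — 4 statements merged into one kernel-verified Lean document; each statement's English description precedes it below -/
import Mathlib

section
/- Tensor inequality: if f ∈ G_X(ψ₁; a₁, b₁) and g ∈ G_Y(ψ₂; a₂, b₂), a = max(a₁,a₂) < b = min(b₁,b₂), and z(x,y) = f(x)g(y) on the product measure space, then ‖z‖_{G_{X×Y}(ψ₁ψ₂; a, b)} ≤ ‖f‖_{G_X(ψ₁; a₁,b₁)} · ‖g‖_{G_Y(ψ₂; a₂,b₂)}. -/
open MeasureTheory Set ENNReal

/-- Grand Lebesgue functional. -/
noncomputable def GNorm {X : Type*} [MeasurableSpace X] (μ : Measure X)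
    (ψ : ℝ → ℝ) (a b : ℝ) (h : X → ℝ) : ℝ≥0∞ :=
  ⨆ p ∈ Set.Ioo a b, eLpNorm h (ENNReal.ofReal p) μ / ENNReal.ofReal (ψ p)

lemma eLpNorm_tensor_prod
    {X Y : Type*} [MeasurableSpace X] [MeasurableSpace Y]
    (μ : Measure X) (ν : Measure Y) [SigmaFinite ν]
    (f : X → ℝ) (g : Y → ℝ) (hf : Measurable f) (hg : Measurable g)
    {p : ℝ} (hp : 0 < p) :
    eLpNorm (fun z : X × Y => f z.1 * g z.2) (ENNReal.ofReal p) (μ.prod ν)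
      = eLpNorm f (ENNReal.ofReal p) μ * eLpNorm g (ENNReal.ofReal p) ν := by
  have hp0 : ENNReal.ofReal p ≠ 0 := by simp [ENNReal.ofReal_eq_zero, not_le, hp]
  rw [eLpNorm_eq_lintegral_rpow_enorm_toReal hp0 ENNReal.ofReal_ne_top,
    eLpNorm_eq_lintegral_rpow_enorm_toReal hp0 ENNReal.ofReal_ne_top,
    eLpNorm_eq_lintegral_rpow_enorm_toReal hp0 ENNReal.ofReal_ne_top,
    ENNReal.toReal_ofReal hp.le]
  have key : ∫⁻ z : X × Y, (‖f z.1 * g z.2‖₊ : ℝ≥0∞) ^ p ∂(μ.prod ν)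
      = (∫⁻ x, (‖f x‖₊ : ℝ≥0∞) ^ p ∂μ) * ∫⁻ y, (‖g y‖₊ : ℝ≥0∞) ^ p ∂ν := by
    have : ∀ z : X × Y, (‖f z.1 * g z.2‖₊ : ℝ≥0∞) ^ p
        = ((‖f z.1‖₊ : ℝ≥0∞) ^ p) * ((‖g z.2‖₊ : ℝ≥0∞) ^ p) := by
      intro z
      rw [nnnorm_mul, ENNReal.coe_mul, ENNReal.mul_rpow_of_nonneg _ _ hp.le]
    simp_rw [this]
    exact lintegral_prod_mul ((hf.enorm.pow_const _).aemeasurable)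
      ((hg.enorm.pow_const _).aemeasurable)
  simp only [enorm_eq_nnnorm]
  rw [key, ENNReal.mul_rpow_of_nonneg _ _ (by positivity : (0:ℝ) ≤ 1 / p)]

/-- Tensor inequality: `‖f ⊗ g‖_{G(ψ₁ψ₂; a, b)} ≤ ‖f‖_{G(ψ₁)} ‖g‖_{G(ψ₂)}` on
the product measure space, where `a = max(a₁,a₂)`, `b = min(b₁,b₂)`. -/
theorem tensor_inequality
    {X Y : Type*} [MeasurableSpace X] [MeasurableSpace Y]
    (μ : Measure X) (ν : Measure Y) [SigmaFinite μ] [SigmaFinite ν]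
    (a₁ b₁ a₂ b₂ : ℝ) (ha₁ : 1 ≤ a₁) (ha₂ : 1 ≤ a₂)
    (hab : max a₁ a₂ < min b₁ b₂)
    (ψ₁ ψ₂ : ℝ → ℝ)
    (hψ₁ : ∀ p ∈ Set.Ioo a₁ b₁, 0 < ψ₁ p)
    (hψ₂ : ∀ p ∈ Set.Ioo a₂ b₂, 0 < ψ₂ p)
    (f : X → ℝ) (g : Y → ℝ) (hf : Measurable f) (hg : Measurable g)
    (hfG : GNorm μ ψ₁ a₁ b₁ f ≠ ⊤) (hgG : GNorm ν ψ₂ a₂ b₂ g ≠ ⊤) :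
    GNorm (μ.prod ν) (fun p => ψ₁ p * ψ₂ p) (max a₁ a₂) (min b₁ b₂)
        (fun z => f z.1 * g z.2)
      ≤ GNorm μ ψ₁ a₁ b₁ f * GNorm ν ψ₂ a₂ b₂ g := by
  rw [GNorm]
  apply iSup₂_le
  intro p hp
  have hp1 : p ∈ Set.Ioo a₁ b₁ :=
    ⟨lt_of_le_of_lt (le_max_left _ _) hp.1, lt_of_lt_of_le hp.2 (min_le_left _ _)⟩
  have hp2 : p ∈ Set.Ioo a₂ b₂ :=
    ⟨lt_of_le_of_lt (le_max_right _ _) hp.1, lt_of_lt_of_le hp.2 (min_le_right _ _)⟩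
  have hppos : 0 < p := lt_of_lt_of_le one_pos (le_trans ha₁ (le_of_lt hp1.1))
  have h1 : 0 < ψ₁ p := hψ₁ p hp1
  have h2 : 0 < ψ₂ p := hψ₂ p hp2
  rw [eLpNorm_tensor_prod μ ν f g hf hg hppos, ENNReal.ofReal_mul h1.le]
  have hx0 : ENNReal.ofReal (ψ₁ p) ≠ 0 := by simp [ENNReal.ofReal_eq_zero, not_le, h1]
  have heq : eLpNorm f (ENNReal.ofReal p) μ * eLpNorm g (ENNReal.ofReal p) ν
      / (ENNReal.ofReal (ψ₁ p) * ENNReal.ofReal (ψ₂ p))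
      = (eLpNorm f (ENNReal.ofReal p) μ / ENNReal.ofReal (ψ₁ p))
        * (eLpNorm g (ENNReal.ofReal p) ν / ENNReal.ofReal (ψ₂ p)) := by
    rw [div_eq_mul_inv, ENNReal.mul_inv (Or.inl hx0) (Or.inl ENNReal.ofReal_ne_top),
      div_eq_mul_inv, div_eq_mul_inv, mul_mul_mul_comm]
  rw [heq]
  exact mul_le_mul' (le_iSup₂ (f := fun p _ =>
      eLpNorm f (ENNReal.ofReal p) μ / ENNReal.ofReal (ψ₁ p)) p hp1)
    (le_iSup₂ (f := fun p _ =>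
      eLpNorm g (ENNReal.ofReal p) ν / ENNReal.ofReal (ψ₂ p)) p hp2)
end

section
/- Power property: if f ∈ G(ψ; a, b) and γ ∈ [a, b] is a constant, and ψ_γ(p) := ψ(γp)^γ, then |f|^γ ∈ G(ψ_γ; a/γ, b/γ) and ‖|f|^γ‖_{G(ψ_γ)} = ‖f‖_{G(ψ)}^γ. -/
open MeasureTheory Set ENNReal

lemma rpow_iSup' {ι : Sort*} (g : ι → ℝ≥0∞) {γ : ℝ} (hγ : 0 < γ) :
    (⨆ i, g i) ^ γ = ⨆ i, g i ^ γ := by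
  have := OrderIso.map_iSup (ENNReal.orderIsoRpow γ hγ) g
  simpa only [ENNReal.orderIsoRpow_apply] using this

/-- Power property: if `f ∈ G(ψ; a,b)` and `γ ∈ [a,b]`, with
`ψ_γ(p) = ψ(γp)^γ`, then `‖|f|^γ‖_{G(ψ_γ; a/γ, b/γ)} = ‖f‖_{G(ψ)}^γ`. -/
theorem power_property
    {X : Type*} [MeasurableSpace X] (μ : Measure X) [SigmaFinite μ]
    (a b : ℝ) (ha : 1 ≤ a) (hab : a < b)
    (ψ : ℝ → ℝ) (hψc : ContinuousOn ψ (Set.Ioo a b))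
    (hψpos : ∀ p ∈ Set.Ioo a b, 0 < ψ p)
    (f : X → ℝ) (hf : Measurable f) (hfG : GNorm μ ψ a b f ≠ ⊤)
    (γ : ℝ) (hγ : γ ∈ Set.Icc a b) :
    GNorm μ (fun p => ψ (γ * p) ^ γ) (a / γ) (b / γ) (fun x => |f x| ^ γ)
      = GNorm μ ψ a b f ^ γ := by
  have hγpos : 0 < γ := lt_of_lt_of_le (lt_of_lt_of_le one_pos ha) hγ.1
  set g : ℝ → ℝ≥0∞ := fun q => eLpNorm f (ENNReal.ofReal q) μ / ENNReal.ofReal (ψ q) with hg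
  have key : ∀ p ∈ Set.Ioo (a / γ) (b / γ),
      eLpNorm (fun x => |f x| ^ γ) (ENNReal.ofReal p) μ
        / ENNReal.ofReal (ψ (γ * p) ^ γ) = g (γ * p) ^ γ := by
    intro p hp
    have hmem : γ * p ∈ Set.Ioo a b := by
      constructor
      · calc a = γ * (a / γ) := by field_simp
          _ < γ * p := by exact mul_lt_mul_of_pos_left hp.1 hγpos
      · calc γ * p < γ * (b / γ) := mul_lt_mul_of_pos_left hp.2 hγpos
          _ = b := by field_simp
    have h1 : eLpNorm (fun x => |f x| ^ γ) (ENNReal.ofReal p) μ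
        = eLpNorm f (ENNReal.ofReal (γ * p)) μ ^ γ := by
      have := eLpNorm_norm_rpow (p := ENNReal.ofReal p) (μ := μ) f hγpos
      simp only [Real.norm_eq_abs] at this
      rw [this, ← ENNReal.ofReal_mul (le_of_lt (lt_trans (div_pos (by linarith) hγpos) hp.1)), mul_comm p γ]
    have h2 : ENNReal.ofReal (ψ (γ * p) ^ γ)
        = ENNReal.ofReal (ψ (γ * p)) ^ γ :=
      (ENNReal.ofReal_rpow_of_pos (hψpos _ hmem)).symm
    rw [h1, h2, ← ENNReal.div_rpow_of_nonneg _ _ hγpos.le]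
  have reindex : (⨆ p ∈ Set.Ioo (a / γ) (b / γ), g (γ * p) ^ γ)
      = ⨆ q ∈ Set.Ioo a b, g q ^ γ := by
    apply le_antisymm
    · refine iSup₂_le fun p hp => ?_
      have hmem : γ * p ∈ Set.Ioo a b := by
        constructor
        · calc a = γ * (a / γ) := by field_simp
            _ < γ * p := mul_lt_mul_of_pos_left hp.1 hγpos
        · calc γ * p < γ * (b / γ) := mul_lt_mul_of_pos_left hp.2 hγpos
            _ = b := by field_simp
      exact le_iSup₂ (f := fun q (_ : q ∈ Set.Ioo a b) => g q ^ γ) (γ * p) hmem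
    · refine iSup₂_le fun q hq => ?_
      have hmem : q / γ ∈ Set.Ioo (a / γ) (b / γ) :=
        ⟨(div_lt_div_iff_of_pos_right hγpos).mpr hq.1, (div_lt_div_iff_of_pos_right hγpos).mpr hq.2⟩
      have heq : g q ^ γ = g (γ * (q / γ)) ^ γ := by rw [mul_div_cancel₀ _ hγpos.ne']
      rw [heq]
      exact le_iSup₂ (f := fun p (_ : p ∈ Set.Ioo (a/γ) (b/γ)) => g (γ * p) ^ γ) (q / γ) hmem
  calc GNorm μ (fun p => ψ (γ * p) ^ γ) (a / γ) (b / γ) (fun x => |f x| ^ γ)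
      = ⨆ p ∈ Set.Ioo (a / γ) (b / γ), g (γ * p) ^ γ := by
        unfold GNorm
        exact biSup_congr key
    _ = ⨆ q ∈ Set.Ioo a b, g q ^ γ := reindex
    _ = (⨆ q ∈ Set.Ioo a b, g q) ^ γ := by
        rw [rpow_iSup' _ hγpos]
        exact iSup_congr fun q => (rpow_iSup' _ hγpos).symm
    _ = GNorm μ ψ a b f ^ γ := rfl
end

section
/- If u is continuously differentiable on a convex domain X ⊆ ℝⁿ (n ≥ 2) vanishing at infinity, |grad u| ∈ G(ψ; a, b) with 1 ≤ a < b < n, and the L^p Sobolev inequality |Bu|_q ≤ C₁ q^{1−1/n} ||grad u||_p holds with p = qn/(q+m), then ‖Bu‖_{G(ν; A₂, B₂)} ≤ C₁ ‖|grad u|‖_{G(ψ; a,b)}, where A₂ = max(1, am/(n−a)), B₂ = bm/(n−b), and ν(q) = q^{1−1/n} ψ(qn/(q+m)). -/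
open MeasureTheory Set ENNReal

/-- Sobolev embedding in Grand Lebesgue spaces: if the classical `L^p` Sobolev
inequality `|Bu|_q ≤ C₁ q^{1−1/n} ‖grad u‖_p` holds with `p = qn/(q+m)`, then
`‖Bu‖_{G(ν; A₂, B₂)} ≤ C₁ ‖|grad u|‖_{G(ψ; a, b)}`, where
`A₂ = max(1, am/(n−a))`, `B₂ = bm/(n−b)`, `ν(q) = q^{1−1/n} ψ(qn/(q+m))`.
Here `μX` is the measure on the domain `X`, `μY` the surface measure on the
submanifold `Y`, `gradu` the function `x ↦ |grad u(x)|`, and `Bu` the trace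
of `u` on `Y`. -/
theorem sobolev_grand_lebesgue
    {X Y : Type*} [MeasurableSpace X] [MeasurableSpace Y]
    (μX : Measure X) (μY : Measure Y)
    (n m : ℕ) (hn : 2 ≤ n) (hm : 1 ≤ m) (hmn : m ≤ n)
    (a b : ℝ) (ha : 1 ≤ a) (hab : a < b) (hbn : b < n)
    (ψ : ℝ → ℝ) (hψpos : ∀ p ∈ Set.Ioo a b, 0 < ψ p)
    (C₁ : ℝ) (hC₁ : 0 ≤ C₁)
    (gradu : X → ℝ) (Bu : Y → ℝ)
    (hgradG : GNorm μX ψ a b gradu ≠ ⊤)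
    (hSobolev : ∀ q : ℝ, q ∈ Set.Ioo (max 1 (a * m / (n - a))) (b * m / (n - b)) →
      eLpNorm Bu (ENNReal.ofReal q) μY
        ≤ ENNReal.ofReal (C₁ * q ^ (1 - 1 / (n:ℝ))) *
          eLpNorm gradu (ENNReal.ofReal (q * n / (q + m))) μX) :
    GNorm μY (fun q => q ^ (1 - 1 / (n:ℝ)) * ψ (q * n / (q + m)))
        (max 1 (a * m / (n - a))) (b * m / (n - b)) Bu
      ≤ ENNReal.ofReal C₁ * GNorm μX ψ a b gradu := by
  have hn0 : (0:ℝ) < n := by positivity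
  have hna : (0:ℝ) < n - a := by
    have : a < (n:ℝ) := lt_trans hab hbn
    linarith
  have hnb : (0:ℝ) < n - b := by linarith
  unfold GNorm
  refine iSup₂_le fun q hq => ?_
  obtain ⟨hq1, hq2⟩ := hq
  have hq0 : (0:ℝ) < q := lt_of_lt_of_le zero_lt_one ((le_max_left 1 _).trans hq1.le)
  have hm0 : (0:ℝ) < m := by positivity
  have hqm : (0:ℝ) < q + m := by positivity
  set p := q * n / (q + m) with hp
  have hpa : a < p := by
    rw [hp, lt_div_iff₀ hqm]
    have h1 : a * m / (n - a) < q := lt_of_le_of_lt (le_max_right 1 _) hq1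
    rw [div_lt_iff₀ hna] at h1
    nlinarith
  have hpb : p < b := by
    rw [hp, div_lt_iff₀ hqm]
    rw [lt_div_iff₀ hnb] at hq2
    nlinarith
  have hψp : 0 < ψ p := hψpos p ⟨hpa, hpb⟩
  have hqpow : 0 < q ^ (1 - 1/(n:ℝ)) := Real.rpow_pos_of_pos hq0 _
  have hSob := hSobolev q ⟨hq1, hq2⟩
  have hT0 : ENNReal.ofReal (q ^ (1 - 1/(n:ℝ))) ≠ 0 := by
    simp only [ne_eq, ENNReal.ofReal_eq_zero, not_le]
    exact hqpow
  have hTtop : ENNReal.ofReal (q ^ (1 - 1/(n:ℝ))) ≠ ⊤ := ENNReal.ofReal_ne_top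
  calc eLpNorm Bu (ENNReal.ofReal q) μY /
        ENNReal.ofReal (q ^ (1 - 1/(n:ℝ)) * ψ p)
      ≤ (ENNReal.ofReal (C₁ * q ^ (1 - 1/(n:ℝ))) *
          eLpNorm gradu (ENNReal.ofReal p) μX) /
        ENNReal.ofReal (q ^ (1 - 1/(n:ℝ)) * ψ p) :=
        ENNReal.div_le_div_right hSob _
    _ = ENNReal.ofReal C₁ *
          (eLpNorm gradu (ENNReal.ofReal p) μX / ENNReal.ofReal (ψ p)) := by
        rw [ENNReal.ofReal_mul hC₁, ENNReal.ofReal_mul hqpow.le]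
        rw [show ENNReal.ofReal C₁ * ENNReal.ofReal (q ^ (1 - 1/(n:ℝ))) *
              eLpNorm gradu (ENNReal.ofReal p) μX
            = ENNReal.ofReal (q ^ (1 - 1/(n:ℝ))) *
              (ENNReal.ofReal C₁ * eLpNorm gradu (ENNReal.ofReal p) μX) by ring]
        rw [ENNReal.mul_div_mul_left _ _ hT0 hTtop, mul_div_assoc]
    _ ≤ ENNReal.ofReal C₁ * GNorm μX ψ a b gradu := by
        gcongr
        unfold GNorm
        exact le_iSup₂_of_le p ⟨hpa, hpb⟩ le_rfl
end

section
/- Equality in the tensor inequality: if ψ₁(p) = |f|_p for all p ∈ (a₁,b₁) and ψ₂(p) = |g|_p for all p ∈ (a₂,b₂), then ‖f‖_{G(ψ₁;a₁,b₁)} = 1, ‖g‖_{G(ψ₂;a₂,b₂)} = 1, and for z(x,y) = f(x)g(y), ‖z‖_{G(ψ₁ψ₂; a, b)} = 1 where a = max(a₁,a₂) < b = min(b₁,b₂), showing Lemma 1 (the tensor inequality) is attained with equality. -/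
open MeasureTheory Set ENNReal

lemma gnorm_eq_one {X : Type*} [MeasurableSpace X] {μ : Measure X}
    {ψ : ℝ → ℝ} {a b : ℝ} {h : X → ℝ} (hne : a < b)
    (hψ : ∀ p ∈ Set.Ioo a b, 0 < ψ p)
    (hrep : ∀ p ∈ Set.Ioo a b, eLpNorm h (ENNReal.ofReal p) μ = ENNReal.ofReal (ψ p)) :
    GNorm μ ψ a b h = 1 := by
  unfold GNorm
  have : ∀ p ∈ Set.Ioo a b,
      eLpNorm h (ENNReal.ofReal p) μ / ENNReal.ofReal (ψ p) = 1 := by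
    intro p hp
    rw [hrep p hp]
    exact ENNReal.div_self (by simpa using (hψ p hp)) ENNReal.ofReal_ne_top
  calc (⨆ p ∈ Set.Ioo a b, eLpNorm h (ENNReal.ofReal p) μ / ENNReal.ofReal (ψ p))
      = ⨆ p ∈ Set.Ioo a b, (1 : ℝ≥0∞) := by
        refine iSup_congr fun p => ?_
        refine iSup_congr fun hp => this p hp
    _ = 1 := biSup_const (Set.nonempty_Ioo.mpr hne)

lemma eLpNorm_prod_mul {X Y : Type*} [MeasurableSpace X] [MeasurableSpace Y]
    (μ : Measure X) (ν : Measure Y) [SigmaFinite ν]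
    {f : X → ℝ} {g : Y → ℝ} (hf : Measurable f) (hg : Measurable g)
    {p : ℝ} (hp : 0 < p) :
    eLpNorm (fun z : X × Y => f z.1 * g z.2) (ENNReal.ofReal p) (μ.prod ν)
      = eLpNorm f (ENNReal.ofReal p) μ * eLpNorm g (ENNReal.ofReal p) ν := by
  have hp0 : ENNReal.ofReal p ≠ 0 := by simpa using hp
  have hpt : ENNReal.ofReal p ≠ ∞ := ENNReal.ofReal_ne_top
  have hpr : (ENNReal.ofReal p).toReal = p := ENNReal.toReal_ofReal hp.le
  rw [eLpNorm_eq_lintegral_rpow_enorm_toReal hp0 hpt, eLpNorm_eq_lintegral_rpow_enorm_toReal hp0 hpt,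
    eLpNorm_eq_lintegral_rpow_enorm_toReal hp0 hpt, hpr]
  simp only [enorm_eq_nnnorm]
  have key : (∫⁻ z, ((‖f z.1 * g z.2‖₊ : ℝ≥0∞)) ^ p ∂(μ.prod ν))
      = (∫⁻ x, ((‖f x‖₊ : ℝ≥0∞)) ^ p ∂μ) * (∫⁻ y, ((‖g y‖₊ : ℝ≥0∞)) ^ p ∂ν) := by
    have h1 : ∀ z : X × Y, ((‖f z.1 * g z.2‖₊ : ℝ≥0∞)) ^ p
        = ((‖f z.1‖₊ : ℝ≥0∞)) ^ p * ((‖g z.2‖₊ : ℝ≥0∞)) ^ p := by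
      intro z
      rw [nnnorm_mul, ENNReal.coe_mul, ENNReal.mul_rpow_of_nonneg _ _ hp.le]
    simp_rw [h1]
    rw [lintegral_prod]
    · have : ∀ x, (∫⁻ y, ((‖f x‖₊ : ℝ≥0∞)) ^ p * ((‖g y‖₊ : ℝ≥0∞)) ^ p ∂ν)
          = ((‖f x‖₊ : ℝ≥0∞)) ^ p * ∫⁻ y, ((‖g y‖₊ : ℝ≥0∞)) ^ p ∂ν := by
        intro x
        exact lintegral_const_mul _ ((hg.nnnorm.coe_nnreal_ennreal).pow_const p)
      simp_rw [this]
      rw [lintegral_mul_const]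
      exact (hf.nnnorm.coe_nnreal_ennreal).pow_const p
    · exact (((hf.comp measurable_fst).nnnorm.coe_nnreal_ennreal.pow_const p).mul
        ((hg.comp measurable_snd).nnnorm.coe_nnreal_ennreal.pow_const p)).aemeasurable
  rw [key, ENNReal.mul_rpow_of_nonneg _ _ (by positivity : (0:ℝ) ≤ 1 / p)]

/-- Equality in the tensor inequality: when `ψ₁(p) = |f|_p` and `ψ₂(p) = |g|_p`,
all three Grand Lebesgue norms equal `1`, so the tensor inequality is attained. -/
theorem tensor_inequality_sharp
    {X Y : Type*} [MeasurableSpace X] [MeasurableSpace Y]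
    (μ : Measure X) (ν : Measure Y) [SigmaFinite μ] [SigmaFinite ν]
    (a₁ b₁ a₂ b₂ : ℝ) (ha₁ : 1 ≤ a₁) (ha₂ : 1 ≤ a₂)
    (hab : max a₁ a₂ < min b₁ b₂)
    (ψ₁ ψ₂ : ℝ → ℝ)
    (hψ₁ : ∀ p ∈ Set.Ioo a₁ b₁, 0 < ψ₁ p)
    (hψ₂ : ∀ p ∈ Set.Ioo a₂ b₂, 0 < ψ₂ p)
    (f : X → ℝ) (g : Y → ℝ) (hf : Measurable f) (hg : Measurable g)
    (hrep₁ : ∀ p ∈ Set.Ioo a₁ b₁,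
      eLpNorm f (ENNReal.ofReal p) μ = ENNReal.ofReal (ψ₁ p))
    (hrep₂ : ∀ p ∈ Set.Ioo a₂ b₂,
      eLpNorm g (ENNReal.ofReal p) ν = ENNReal.ofReal (ψ₂ p)) :
    GNorm μ ψ₁ a₁ b₁ f = 1 ∧ GNorm ν ψ₂ a₂ b₂ g = 1 ∧
    GNorm (μ.prod ν) (fun p => ψ₁ p * ψ₂ p) (max a₁ a₂) (min b₁ b₂)
      (fun z => f z.1 * g z.2) = 1 := by
  have hab₁ : a₁ < b₁ := lt_of_le_of_lt (le_max_left _ _) (lt_of_lt_of_le hab (min_le_left _ _))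
  have hab₂ : a₂ < b₂ := lt_of_le_of_lt (le_max_right _ _) (lt_of_lt_of_le hab (min_le_right _ _))
  have hsub : ∀ p ∈ Set.Ioo (max a₁ a₂) (min b₁ b₂),
      p ∈ Set.Ioo a₁ b₁ ∧ p ∈ Set.Ioo a₂ b₂ := by
    intro p hp
    constructor
    · exact ⟨lt_of_le_of_lt (le_max_left _ _) hp.1, lt_of_lt_of_le hp.2 (min_le_left _ _)⟩
    · exact ⟨lt_of_le_of_lt (le_max_right _ _) hp.1, lt_of_lt_of_le hp.2 (min_le_right _ _)⟩
  refine ⟨gnorm_eq_one hab₁ hψ₁ hrep₁, gnorm_eq_one hab₂ hψ₂ hrep₂, ?_⟩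
  refine gnorm_eq_one hab ?_ ?_
  · intro p hp
    exact mul_pos (hψ₁ p (hsub p hp).1) (hψ₂ p (hsub p hp).2)
  · intro p hp
    have hppos : (0:ℝ) < p := by
      have h1 := hp.1
      have h2 : a₁ ≤ max a₁ a₂ := le_max_left _ _
      linarith
    rw [eLpNorm_prod_mul μ ν hf hg hppos, hrep₁ p (hsub p hp).1, hrep₂ p (hsub p hp).2,
      ← ENNReal.ofReal_mul (hψ₁ p (hsub p hp).1).le]
end
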